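/- Let F be a finite field and N, k, l natural numbers. Equip F^N with the uniform probability measure. Let f : F^N → F^k and g : F^N → F^l be linear maps such that the combined linear map x ↦ (f(x), g(x)) from F^N to F^k × F^l is surjective. Then, as random variables on F^N with the uniform measure, f and g are independent, and the distribution (pushforward measure) of f is the uniform measure on F^k. -/

import Mathlib

open MeasureTheory ProbabilityTheory
open scoped ENNReal

section aux

variable {G H : Type*} [AddCommGroup G] [AddCommGroup H]

/-- Preimage of a set under a surjective hom is equivalent to `s × ker`. -/
noncomputable def preimageEquiv (h : G →+ H) (hs : Function.Surjective h) (s : Set H) :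
    (h ⁻¹' s) ≃ s × (h ⁻¹' ({0} : Set H)) where
  toFun x := ⟨⟨h x.1, x.2⟩, ⟨x.1 - Function.surjInv hs (h x.1), by
    simp [Set.mem_preimage, map_sub, Function.surjInv_eq hs]⟩⟩
  invFun p := ⟨Function.surjInv hs p.1.1 + p.2.1, by
    have h2 : h p.2.1 = 0 := p.2.2
    simp [Set.mem_preimage, map_add, Function.surjInv_eq hs, h2, p.1.2]⟩
  left_inv x := by
    ext
    simp [add_sub_cancel]
  right_inv p := by
    have h2 : h p.2.1 = 0 := p.2.2
    ext <;> simp [map_add, Function.surjInv_eq hs, h2]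

lemma card_preimage (h : G →+ H) (hs : Function.Surjective h) (s : Set H) :
    Nat.card (h ⁻¹' s) = Nat.card s * Nat.card (h ⁻¹' ({0} : Set H)) := by
  rw [Nat.card_congr (preimageEquiv h hs s), Nat.card_prod]

lemma counting [Finite G] [Finite H] (h : G →+ H) (hs : Function.Surjective h) (s : Set H) :
    (Nat.card (h ⁻¹' s) : ℝ≥0∞) / Nat.card G = Nat.card s / Nat.card H := by
  have hG : Nat.card G = Nat.card H * Nat.card (h ⁻¹' ({0} : Set H)) := by
    have := card_preimage h hs Set.univ
    simpa [Nat.card_congr (Equiv.Set.univ G), Nat.card_congr (Equiv.Set.univ H)] using this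
  have hker : (Nat.card (h ⁻¹' ({0} : Set H)) : ℝ≥0∞) ≠ 0 := by
    have : Nonempty (h ⁻¹' ({0} : Set H)) := ⟨⟨0, by simp⟩⟩
    exact Nat.cast_ne_zero.mpr Nat.card_pos.ne'
  rw [card_preimage h hs s, hG]
  push_cast
  rw [ENNReal.mul_div_mul_right _ _ hker (by simp)]

lemma uniform_apply {α : Type*} [Fintype α] [Nonempty α] [MeasurableSpace α] {s : Set α}
    (hm : MeasurableSet s) :
    (PMF.uniformOfFintype α).toMeasure s = Nat.card s / Nat.card α := by
  classical
  rw [PMF.toMeasure_uniformOfFintype_apply s hm]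
  congr 1
  · exact_mod_cast (Nat.card_eq_fintype_card (α := s)).symm
  · exact_mod_cast (Nat.card_eq_fintype_card (α := α)).symm

lemma ennreal_div4 (a b : ℝ≥0∞) {c d : ℝ≥0∞} (hc : c ≠ 0) (hc' : c ≠ ⊤) (_hd : d ≠ 0)
    (_hd' : d ≠ ⊤) : (a * b) / (c * d) = a / c * (b / d) := by
  rw [div_eq_mul_inv, ENNReal.mul_inv (Or.inl hc) (Or.inl hc'), div_eq_mul_inv, div_eq_mul_inv,
    mul_mul_mul_comm]

end aux

theorem stmt_4 (F : Type*) [Field F] [Fintype F] (N k l : ℕ)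
    (f : (Fin N → F) →ₗ[F] (Fin k → F)) (g : (Fin N → F) →ₗ[F] (Fin l → F))
    (hsurj : Function.Surjective (fun x : Fin N → F => (f x, g x))) :
    letI : MeasurableSpace (Fin N → F) := ⊤
    letI : MeasurableSpace (Fin k → F) := ⊤
    letI : MeasurableSpace (Fin l → F) := ⊤
    IndepFun (⇑f) (⇑g) (PMF.uniformOfFintype (Fin N → F)).toMeasure ∧
      Measure.map (⇑f) (PMF.uniformOfFintype (Fin N → F)).toMeasure
        = (PMF.uniformOfFintype (Fin k → F)).toMeasure := by
  letI : MeasurableSpace (Fin N → F) := ⊤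
  letI : MeasurableSpace (Fin k → F) := ⊤
  letI : MeasurableSpace (Fin l → F) := ⊤
  set φ : (Fin N → F) →+ (Fin k → F) × (Fin l → F) := (f.prod g).toAddMonoidHom with hφ
  have hφs : Function.Surjective φ := hsurj
  have hfs : Function.Surjective f := fun y => by
    obtain ⟨x, hx⟩ := hsurj (y, 0); exact ⟨x, congrArg Prod.fst hx⟩
  have hgs : Function.Surjective g := fun y => by
    obtain ⟨x, hx⟩ := hsurj (0, y); exact ⟨x, congrArg Prod.snd hx⟩
  have hkcard : (Nat.card (Fin k → F) : ℝ≥0∞) ≠ 0 := by simp [Nat.card_pos.ne']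
  have hkcard' : (Nat.card (Fin k → F) : ℝ≥0∞) ≠ ⊤ := by simp
  have hlcard : (Nat.card (Fin l → F) : ℝ≥0∞) ≠ 0 := by simp [Nat.card_pos.ne']
  have hlcard' : (Nat.card (Fin l → F) : ℝ≥0∞) ≠ ⊤ := by simp
  have hms : ∀ {α : Type _} (s : Set α), MeasurableSet[⊤] s := fun _ => trivial
  constructor
  · rw [indepFun_iff_measure_inter_preimage_eq_mul]
    intro s t _ _
    have hset : ⇑f ⁻¹' s ∩ ⇑g ⁻¹' t = φ ⁻¹' (s ×ˢ t) := by
      ext x; simp [hφ, Set.mem_prod]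
    have hcf := counting f.toAddMonoidHom hfs s
    have hcg := counting g.toAddMonoidHom hgs t
    simp only [LinearMap.toAddMonoidHom_coe] at hcf hcg
    rw [hset, uniform_apply (hms _), uniform_apply (hms _), uniform_apply (hms _),
      counting φ hφs, hcf, hcg]
    · have h1 : Nat.card ((s ×ˢ t : Set _)) = Nat.card s * Nat.card t := by
        rw [Nat.card_congr (Equiv.Set.prod s t), Nat.card_prod]
      rw [h1, Nat.card_prod]
      push_cast
      exact ennreal_div4 _ _ hkcard hkcard' hlcard hlcard'
  · ext s hm
    have hcf := counting f.toAddMonoidHom hfs s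
    simp only [LinearMap.toAddMonoidHom_coe] at hcf
    rw [Measure.map_apply measurable_from_top hm, uniform_apply (hms _), uniform_apply hm, hcf]
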